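/- Let A : ℝ^d → ℝ be convex differentiable with minimizer x^{k,*}, and consider one step of the Tensor Extragradient Method: given x^t, let x^{t+1/2} minimize Φ^p_A(x; x^t) + (pM/(p+1)!)‖x − x^t‖^{p+1} (with M ≥ L_p, where A has L_p-Lipschitz p-th derivatives), and set x^{t+1} = x^t − γ_t ∇A(x^{t+1/2}) with γ_t = ((M/(p−1)!)‖x^{t+1/2} − x^t‖^{p−1})^{-1}. Then ‖x^{t+1} − x^{k,*}‖² ≤ ‖x^t − x^{k,*}‖² − (1 − (L_p/(pM))²)‖x^t − x^{t+1/2}‖². -/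

import Mathlib

open Finset

/-- The `p`-th order Taylor polynomial of `A` at `z`, evaluated at `x`. -/
noncomputable def taylorApprox {d : ℕ} (p : ℕ) (A : EuclideanSpace ℝ (Fin d) → ℝ)
    (z x : EuclideanSpace ℝ (Fin d)) : ℝ :=
  ∑ i ∈ Finset.range (p + 1),
    (1 / (Nat.factorial i : ℝ)) * iteratedFDeriv ℝ i A z (fun _ => x - z)


open Finset Fin Function

variable {E F : Type*} [NormedAddCommGroup E] [NormedSpace ℝ E]
  [NormedAddCommGroup F] [NormedSpace ℝ F]

lemma itfd_swap (n : ℕ) (f : E → F) (hf : ContDiff ℝ ((n + 2 : ℕ) : ℕ∞) f) (x a b : E)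
    (u : Fin n → E) :
    iteratedFDeriv ℝ (n + 2) f x (Fin.cons a (Fin.cons b u)) =
      iteratedFDeriv ℝ (n + 2) f x (Fin.cons b (Fin.cons a u)) := by
  have h2 : ContDiff ℝ 2 (iteratedFDeriv ℝ n f) :=
    hf.iteratedFDeriv_right (by push_cast [add_comm]; norm_num)
  set g := fderiv ℝ (iteratedFDeriv ℝ n f) with hg
  have hder : ∀ y, HasFDerivAt (iteratedFDeriv ℝ n f) (g y) y := fun y =>
    ((h2.differentiable (by norm_num)) y).hasFDerivAt
  have hg1 : ContDiff ℝ 1 g := h2.fderiv_right (by norm_num)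
  have hx : HasFDerivAt g (fderiv ℝ g x) x := ((hg1.differentiable (by norm_num)) x).hasFDerivAt
  have sym := second_derivative_symmetric hder hx a b
  have key : ∀ (a b : E) (u : Fin n → E),
      iteratedFDeriv ℝ (n + 2) f x (Fin.cons a (Fin.cons b u)) = fderiv ℝ g x a b u := by
    intro a b u
    have h1 : iteratedFDeriv ℝ (n + 2) f x (Fin.cons a (Fin.cons b u)) =
        fderiv ℝ (iteratedFDeriv ℝ (n + 1) f) x a (Fin.cons b u) := by
      rw [iteratedFDeriv_succ_apply_left]
      simp
    rw [h1]
    have h3 : fderiv ℝ (iteratedFDeriv ℝ (n + 1) f) x =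
        ((continuousMultilinearCurryLeftEquiv ℝ (fun _ : Fin (n + 1) => E) F).symm.toContinuousLinearEquiv.toContinuousLinearMap).comp
          (fderiv ℝ g x) := by
      rw [iteratedFDeriv_succ_eq_comp_left]
      exact ((((continuousMultilinearCurryLeftEquiv ℝ (fun _ : Fin (n + 1) => E) F).symm.toContinuousLinearEquiv.toContinuousLinearMap).hasFDerivAt.comp x ((hg1.differentiable (by norm_num)) x).hasFDerivAt)).fderiv
    rw [h3]
    simp
    rfl
  rw [key, key, sym]

lemma itfd_update (n : ℕ) (f : E → F) (hf : ContDiff ℝ ((n + 1 : ℕ) : ℕ∞) f) (x w v : E)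
    (j : Fin (n + 1)) :
    iteratedFDeriv ℝ (n + 1) f x (Function.update (fun _ => w) j v) =
      iteratedFDeriv ℝ (n + 1) f x (Fin.snoc (fun _ : Fin n => w) v) := by
  induction n generalizing x with
  | zero =>
    congr 1
    funext i
    fin_cases i
    fin_cases j
    simp [Fin.snoc]
  | succ n IH =>
    have hf' : ContDiff ℝ ((n + 1 : ℕ) : ℕ∞) f := hf.of_le (by exact_mod_cast by omega)
    have hsucc : ∀ j' : Fin (n + 1),
        iteratedFDeriv ℝ (n + 2) f x (Function.update (fun _ => w) j'.succ v) =
          iteratedFDeriv ℝ (n + 2) f x (Fin.snoc (fun _ : Fin (n + 1) => w) v) := by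
      intro j'
      have hvec : (Function.update (fun _ : Fin (n + 2) => w) j'.succ v) =
          Fin.cons w (Function.update (fun _ : Fin (n + 1) => w) j' v) := by
        funext i
        refine Fin.cases ?_ (fun k => ?_) i
        · simp [Function.update_apply, Fin.succ_ne_zero, eq_comm]
        · simp [Function.update_apply, Fin.succ_inj]
      have hconst : (Fin.cons w (fun _ : Fin n => w) : Fin (n + 1) → E) = fun _ => w :=
        funext fun i => Fin.cases rfl (fun _ => rfl) i
      have hvec2 : (Fin.snoc (fun _ : Fin (n + 1) => w) v : Fin (n + 2) → E) =
          Fin.cons w (Fin.snoc (fun _ : Fin n => w) v) := by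
        rw [Fin.cons_snoc_eq_snoc_cons, hconst]
      rw [hvec, hvec2]
      rw [iteratedFDeriv_succ_apply_left, iteratedFDeriv_succ_apply_left]
      simp only [Fin.cons_zero, Fin.tail_cons]
      set t₁ := Function.update (fun _ : Fin (n + 1) => w) j' v
      set t₂ := (Fin.snoc (fun _ : Fin n => w) v : Fin (n + 1) → E)
      set Ψ : (ContinuousMultilinearMap ℝ (fun _ : Fin (n + 1) => E) F) →L[ℝ] F :=
        (ContinuousMultilinearMap.apply ℝ (fun _ : Fin (n + 1) => E) F t₁) -
          (ContinuousMultilinearMap.apply ℝ (fun _ : Fin (n + 1) => E) F t₂) with hΨ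
      have hzero : ∀ y, Ψ (iteratedFDeriv ℝ (n + 1) f y) = 0 := by
        intro y
        have h := IH hf' y j'
        simp only [hΨ, ContinuousLinearMap.sub_apply, ContinuousMultilinearMap.apply_apply,
          sub_eq_zero]
        exact h
      have hdiff : DifferentiableAt ℝ (iteratedFDeriv ℝ (n + 1) f) x :=
        (hf.differentiable_iteratedFDeriv (by exact_mod_cast by omega)) x
      have hcomp := (Ψ.hasFDerivAt.comp x hdiff.hasFDerivAt).fderiv
      have h0 : (fun y => Ψ (iteratedFDeriv ℝ (n + 1) f y)) = fun _ => (0 : F) :=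
        funext hzero
      have hkey : Ψ ((fderiv ℝ (iteratedFDeriv ℝ (n + 1) f) x) w) = 0 := by
        have : Ψ ((fderiv ℝ (iteratedFDeriv ℝ (n + 1) f) x) w) =
            fderiv ℝ (fun y => Ψ (iteratedFDeriv ℝ (n + 1) f y)) x w := by
          rw [show (fun y => Ψ (iteratedFDeriv ℝ (n + 1) f y)) =
            ⇑Ψ ∘ iteratedFDeriv ℝ (n + 1) f from rfl, hcomp]
          rfl
        rw [this, h0]
        simp
      simpa only [hΨ, ContinuousLinearMap.sub_apply, ContinuousMultilinearMap.apply_apply,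
        sub_eq_zero] using hkey
    refine Fin.cases ?_ hsucc j
    have e1 : Function.update (fun _ : Fin (n + 2) => w) 0 v =
        Fin.cons v (Fin.cons w (fun _ : Fin n => w)) := by
      funext i
      refine Fin.cases ?_ (fun k => ?_) i
      · simp
      · refine Fin.cases ?_ (fun k' => ?_) k <;>
          simp [Function.update_apply, Fin.succ_ne_zero]
    have e2 : Fin.cons w (Fin.cons v (fun _ : Fin n => w)) =
        Function.update (fun _ : Fin (n + 2) => w) (Fin.succ 0) v := by
      funext i
      refine Fin.cases ?_ (fun k => ?_) i
      · simp [Function.update_apply, (Fin.succ_ne_zero (0 : Fin (n+1))).symm]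
      · refine Fin.cases ?_ (fun k' => ?_) k
        · simp [Function.update_apply, Fin.succ_ne_zero, Fin.succ_inj]
        · have hne : (k'.succ.succ : Fin (n + 2)) ≠ 1 := by
            intro hcontra
            have := congrArg Fin.val hcontra
            simp only [Fin.val_succ, Fin.val_one] at this
            omega
          simp [Function.update_apply, hne]
    rw [e1, itfd_swap n f hf x v w _, e2]
    exact hsucc 0

lemma itderiv_line (i : ℕ) : ∀ (f : E → F), ContDiff ℝ (i : ℕ∞) f → ∀ (z u : E) (t : ℝ),
    iteratedDeriv i (fun s : ℝ => f (z + s • u)) t =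
      iteratedFDeriv ℝ i f (z + t • u) (fun _ => u) := by
  induction i with
  | zero => intro f hf z u t; simp
  | succ i IH =>
    intro f hf z u t
    have hline : ∀ s : ℝ, HasDerivAt (fun s : ℝ => z + s • u) u s := by
      intro s
      simpa using ((hasDerivAt_id s).smul_const u).const_add z
    have hfd : Differentiable ℝ f := hf.differentiable (by simp)
    have hderiv : deriv (fun s : ℝ => f (z + s • u)) =
        fun s : ℝ => (ContinuousLinearMap.apply ℝ F u) (fderiv ℝ f (z + s • u)) := by
      funext s
      exact (((hfd (z + s • u)).hasFDerivAt.comp_hasDerivAt s (hline s))).deriv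
    rw [iteratedDeriv_succ', hderiv]
    have hB : ContDiff ℝ (i : ℕ∞) (fderiv ℝ f) := hf.fderiv_right (by exact_mod_cast le_rfl)
    have hg : ContDiff ℝ (i : ℕ∞) (fun y => (ContinuousLinearMap.apply ℝ F u) (fderiv ℝ f y)) :=
      (ContinuousLinearMap.apply ℝ F u).contDiff.comp hB
    rw [IH _ hg z u t]
    have hcomp := (ContinuousLinearMap.apply ℝ F u).iteratedFDeriv_comp_left (x := z + t • u) (hB.contDiffAt) (by exact_mod_cast le_rfl)
    rw [show (⇑(ContinuousLinearMap.apply ℝ F u) ∘ fderiv ℝ f) =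
      (fun y => (ContinuousLinearMap.apply ℝ F u) (fderiv ℝ f y)) from rfl] at hcomp
    rw [hcomp]
    rw [iteratedFDeriv_succ_apply_right]
    rfl

lemma oneDim_taylor (K : ℝ) : ∀ (n : ℕ) (ψ : ℝ → F), ContDiff ℝ (n : ℕ∞) ψ →
    (∀ s t : ℝ, ‖iteratedDeriv n ψ s - iteratedDeriv n ψ t‖ ≤ K * |s - t|) →
    ∀ t ∈ Set.Icc (0 : ℝ) 1,
      ‖ψ t - ∑ i ∈ Finset.range (n + 1), (t ^ i / (Nat.factorial i : ℝ)) • iteratedDeriv i ψ 0‖ ≤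
        K * t ^ (n + 1) / (Nat.factorial (n + 1) : ℝ) := by
  intro n
  induction n with
  | zero =>
    intro ψ _ hLip t ht
    have := hLip t 0
    simp only [iteratedDeriv_zero] at this
    simpa [abs_of_nonneg ht.1] using this
  | succ n IH =>
    intro ψ hψ hLip t ht
    set φ := deriv ψ with hφ
    have hψd : Differentiable ℝ ψ :=
      hψ.differentiable (by simp)
    have hφc : ContDiff ℝ (n : ℕ∞) φ := by
      have h := (contDiff_succ_iff_deriv.mp
        (show ContDiff ℝ ((n : WithTop ℕ∞) + 1) ψ by exact_mod_cast hψ))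
      exact_mod_cast h.2.2
    have hφLip : ∀ s t : ℝ, ‖iteratedDeriv n φ s - iteratedDeriv n φ t‖ ≤ K * |s - t| := by
      intro s t
      simp only [hφ, ← iteratedDeriv_succ']
      exact hLip s t
    set R : ℝ → F := fun t =>
      ψ t - ∑ i ∈ Finset.range (n + 2), (t ^ i / (Nat.factorial i : ℝ)) • iteratedDeriv i ψ 0
      with hR
    have hR0 : R 0 = 0 := by
      simp only [hR]
      rw [Finset.sum_range_succ']
      rw [Finset.sum_eq_zero (fun i _ => by
        simp [zero_pow (Nat.succ_ne_zero i)] :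
        ∀ i ∈ Finset.range (n + 1),
          ((0:ℝ) ^ (i+1) / (Nat.factorial (i+1) : ℝ)) • iteratedDeriv (i+1) ψ 0 = 0)]
      simp
    have hRder : ∀ s : ℝ, HasDerivAt R
        (φ s - ∑ j ∈ Finset.range (n + 1),
          (s ^ j / (Nat.factorial j : ℝ)) • iteratedDeriv j φ 0) s := by
      intro s
      have h1 : HasDerivAt ψ (φ s) s := (hψd s).hasDerivAt
      have h2 : HasDerivAt (fun t : ℝ =>
          ∑ i ∈ Finset.range (n + 2), (t ^ i / (Nat.factorial i : ℝ)) • iteratedDeriv i ψ 0)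
          (∑ i ∈ Finset.range (n + 2),
            ((i : ℝ) * s ^ (i - 1) / (Nat.factorial i : ℝ)) • iteratedDeriv i ψ 0) s := by
        refine HasDerivAt.fun_sum fun i _ => ?_
        simpa [div_eq_mul_inv, mul_comm, mul_assoc, mul_left_comm] using
          (((hasDerivAt_pow i s).div_const (Nat.factorial i : ℝ)).smul_const (iteratedDeriv i ψ 0))
      have h3 : ∑ i ∈ Finset.range (n + 2),
            ((i : ℝ) * s ^ (i - 1) / (Nat.factorial i : ℝ)) • iteratedDeriv i ψ 0 =
          ∑ j ∈ Finset.range (n + 1), (s ^ j / (Nat.factorial j : ℝ)) • iteratedDeriv j φ 0 := by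
        rw [Finset.sum_range_succ']
        simp only [Nat.cast_zero, zero_mul, Nat.factorial_zero, Nat.cast_one, zero_div, zero_smul,
          add_zero]
        refine Finset.sum_congr rfl fun j _ => ?_
        rw [show iteratedDeriv (j + 1) ψ = iteratedDeriv j φ from iteratedDeriv_succ' ..]
        congr 1
        rw [Nat.factorial_succ]
        push_cast
        rw [mul_div_mul_left _ _ (by positivity : ((j:ℝ) + 1) ≠ 0)]
      rw [← h3]
      exact h1.sub h2
    have key : ∀ x ∈ Set.Icc (0:ℝ) 1, ‖R x‖ ≤ K * x ^ (n + 2) / (Nat.factorial (n + 2) : ℝ) := by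
      have hBder : ∀ x : ℝ, HasDerivAt (fun t : ℝ => K * t ^ (n + 2) / (Nat.factorial (n + 2) : ℝ))
          (K * x ^ (n + 1) / (Nat.factorial (n + 1) : ℝ)) x := by
        intro x
        have h := ((hasDerivAt_pow (n + 2) x).const_mul K).div_const (Nat.factorial (n + 2) : ℝ)
        refine h.congr_deriv ?_
        rw [show n + 2 - 1 = n + 1 by omega, Nat.factorial_succ (n + 1)]
        push_cast
        have h2 : ((Nat.factorial (n + 1) : ℝ)) ≠ 0 := by positivity
        field_simp
        ring
      refine image_norm_le_of_norm_deriv_right_le_deriv_boundary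
        (fun x hx => ((hRder x).continuousAt).continuousWithinAt)
        (fun x hx => (hRder x).hasDerivWithinAt) ?_ hBder ?_
      · simp [hR0]
      · intro x hx
        exact IH φ hφc hφLip x ⟨hx.1, le_of_lt hx.2⟩
    exact key t ht

lemma taylor_remainder (n : ℕ) (f : E → F) (hf : ContDiff ℝ (n : ℕ∞) f) (L : ℝ)
    (hLip : ∀ x y : E, ‖iteratedFDeriv ℝ n f x - iteratedFDeriv ℝ n f y‖ ≤ L * ‖x - y‖)
    (z x : E) :
    ‖f x - ∑ i ∈ Finset.range (n + 1),
        (1 / (Nat.factorial i : ℝ)) • iteratedFDeriv ℝ i f z (fun _ => x - z)‖ ≤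
      L * ‖x - z‖ ^ (n + 1) / (Nat.factorial (n + 1) : ℝ) := by
  set u := x - z with hu
  set ψ : ℝ → F := fun s => f (z + s • u) with hψ
  have hline : ContDiff ℝ (n : ℕ∞) (fun s : ℝ => z + s • u) :=
    contDiff_const.add (contDiff_id.smul contDiff_const)
  have hψc : ContDiff ℝ (n : ℕ∞) ψ := hf.comp hline
  have hψLip : ∀ s t : ℝ, ‖iteratedDeriv n ψ s - iteratedDeriv n ψ t‖ ≤
      (L * ‖u‖ ^ (n + 1)) * |s - t| := by
    intro s t
    rw [hψ, itderiv_line n f hf z u s, itderiv_line n f hf z u t]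
    have h1 : (iteratedFDeriv ℝ n f (z + s • u)) (fun _ => u) -
        (iteratedFDeriv ℝ n f (z + t • u)) (fun _ => u) =
        (iteratedFDeriv ℝ n f (z + s • u) - iteratedFDeriv ℝ n f (z + t • u)) (fun _ => u) := by
      simp [ContinuousMultilinearMap.sub_apply]
    rw [h1]
    calc ‖(iteratedFDeriv ℝ n f (z + s • u) - iteratedFDeriv ℝ n f (z + t • u)) (fun _ => u)‖
        ≤ ‖iteratedFDeriv ℝ n f (z + s • u) - iteratedFDeriv ℝ n f (z + t • u)‖ *
          ∏ _i : Fin n, ‖u‖ :=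
          (iteratedFDeriv ℝ n f (z + s • u) - iteratedFDeriv ℝ n f (z + t • u)).le_opNorm _
      _ = ‖iteratedFDeriv ℝ n f (z + s • u) - iteratedFDeriv ℝ n f (z + t • u)‖ * ‖u‖ ^ n := by
          simp
      _ ≤ (L * ‖(z + s • u) - (z + t • u)‖) * ‖u‖ ^ n := by
          exact mul_le_mul_of_nonneg_right (hLip _ _) (by positivity)
      _ = (L * ‖u‖ ^ (n + 1)) * |s - t| := by
          rw [show (z + s • u) - (z + t • u) = (s - t) • u by module]
          rw [norm_smul]
          simp [Real.norm_eq_abs]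
          ring
  have key := oneDim_taylor (L * ‖u‖ ^ (n + 1)) n ψ hψc hψLip 1 (by norm_num)
  have e1 : ψ 1 = f x := by rw [hψ]; simp [hu]
  have e2 : ∀ i ∈ Finset.range (n + 1),
      ((1:ℝ) ^ i / (Nat.factorial i : ℝ)) • iteratedDeriv i ψ 0 =
      (1 / (Nat.factorial i : ℝ)) • iteratedFDeriv ℝ i f z (fun _ => u) := by
    intro i hi
    rw [hψ, itderiv_line i f (hf.of_le (by exact_mod_cast Nat.lt_succ_iff.mp (Finset.mem_range.mp hi))) z u 0]
    simp
  rw [e1, Finset.sum_congr rfl e2] at key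
  calc ‖f x - ∑ i ∈ Finset.range (n + 1),
        (1 / (Nat.factorial i : ℝ)) • iteratedFDeriv ℝ i f z (fun _ => u)‖
      ≤ L * ‖u‖ ^ (n + 1) * 1 ^ (n + 1) / (Nat.factorial (n + 1) : ℝ) := key
    _ = L * ‖u‖ ^ (n + 1) / (Nat.factorial (n + 1) : ℝ) := by norm_num

lemma taylor_poly_hasFDerivAt (p : ℕ) (A : E → ℝ) (hA : ContDiff ℝ (p : ℕ∞) A) (z y : E) :
    HasFDerivAt (fun x => ∑ i ∈ Finset.range (p + 1),
        (1 / (Nat.factorial i : ℝ)) * iteratedFDeriv ℝ i A z (fun _ => x - z))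
      (∑ j ∈ Finset.range p,
        (1 / (Nat.factorial j : ℝ)) • iteratedFDeriv ℝ j (fderiv ℝ A) z (fun _ => y - z)) y := by
  classical
  set c : ℕ → (E →L[ℝ] ℝ) := fun j =>
    iteratedFDeriv ℝ j (fderiv ℝ A) z (fun _ => y - z) with hc
  set F' : ℕ → (E →L[ℝ] ℝ) := fun i => match i with
    | 0 => 0
    | j + 1 => (1 / (Nat.factorial (j + 1) : ℝ)) • (((j : ℝ) + 1) • c j) with hF'
  have hterm : ∀ i ∈ Finset.range (p + 1), HasFDerivAt
      (fun x => (1 / (Nat.factorial i : ℝ)) * iteratedFDeriv ℝ i A z (fun _ => x - z)) (F' i) y := by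
    intro i hi
    match i with
    | 0 =>
      have : (fun x => (1 / (Nat.factorial 0 : ℝ)) * iteratedFDeriv ℝ 0 A z (fun _ => x - z)) =
          fun _ => (1 / (Nat.factorial 0 : ℝ)) * A z := by
        funext x
        rw [iteratedFDeriv_zero_apply]
      rw [this]
      exact hasFDerivAt_const _ _
    | j + 1 =>
      have hj1p : j + 1 ≤ p := Nat.lt_succ_iff.mp (Finset.mem_range.mp hi)
      set m := iteratedFDeriv ℝ (j + 1) A z with hm
      have hsub : ∀ i : Fin (j + 1), HasFDerivAt (fun x : E => x - z)
          (ContinuousLinearMap.id ℝ E) y := fun _ => (hasFDerivAt_id y).sub_const z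
      have h1 : HasFDerivAt (fun x => m (fun _ : Fin (j + 1) => x - z))
          (∑ i : Fin (j + 1), (m.toContinuousLinearMap (fun _ => y - z) i) ∘L
            (ContinuousLinearMap.id ℝ E)) y := HasFDerivAt.multilinear_comp m hsub
      have h2 : (∑ i : Fin (j + 1), (m.toContinuousLinearMap (fun _ => y - z) i) ∘L
            (ContinuousLinearMap.id ℝ E)) = ((j : ℝ) + 1) • c j := by
        ext v
        simp only [ContinuousLinearMap.sum_apply, ContinuousLinearMap.comp_apply,
          ContinuousLinearMap.coe_id', id_eq, ContinuousMultilinearMap.toContinuousLinearMap_apply,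
          ContinuousLinearMap.smul_apply]
        have hupd : ∀ i : Fin (j + 1), m (Function.update (fun _ => y - z) i v) = c j v := by
          intro i
          rw [hm, itfd_update j A (hA.of_le (by exact_mod_cast hj1p)) z (y - z) v i]
          rw [iteratedFDeriv_succ_apply_right]
          rw [hc]
          simp
        rw [Finset.sum_congr rfl (fun i _ => hupd i)]
        simp [mul_comm]
      rw [h2] at h1
      exact h1.const_mul _
  have hsum := HasFDerivAt.fun_sum hterm
  have : (∑ i ∈ Finset.range (p + 1), F' i) =
      ∑ j ∈ Finset.range p, (1 / (Nat.factorial j : ℝ)) • c j := by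
    rw [Finset.sum_range_succ']
    have : ∀ j, F' (j + 1) = (1 / (Nat.factorial j : ℝ)) • c j := by
      intro j
      rw [hF']
      simp only
      rw [smul_smul]
      congr 1
      rw [Nat.factorial_succ]
      push_cast
      field_simp
    simp only [this]
    simp [hF']
  rw [this] at hsum
  exact hsum

lemma lip_fderiv (n : ℕ) (f : E → F) (L : ℝ)
    (hLip : ∀ x y : E, ‖iteratedFDeriv ℝ (n + 1) f x - iteratedFDeriv ℝ (n + 1) f y‖ ≤ L * ‖x - y‖) :
    ∀ x y : E, ‖iteratedFDeriv ℝ n (fderiv ℝ f) x - iteratedFDeriv ℝ n (fderiv ℝ f) y‖ ≤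
      L * ‖x - y‖ := by
  intro x y
  set e := continuousMultilinearCurryRightEquiv' ℝ n E F with he
  have h1 : ∀ w : E, iteratedFDeriv ℝ (n + 1) f w =
      e.symm (iteratedFDeriv ℝ n (fderiv ℝ f) w) := fun w => iteratedFDeriv_succ_eq_comp_right
  have h2 : ‖iteratedFDeriv ℝ n (fderiv ℝ f) x - iteratedFDeriv ℝ n (fderiv ℝ f) y‖ =
      ‖iteratedFDeriv ℝ (n + 1) f x - iteratedFDeriv ℝ (n + 1) f y‖ := by
    rw [h1 x, h1 y, ← LinearIsometryEquiv.map_sub, LinearIsometryEquiv.norm_map]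
  rw [h2]
  exact hLip x y

section Inner

variable {H : Type*} [NormedAddCommGroup H] [InnerProductSpace ℝ H]

lemma norm_pow_hasFDerivAt (q : ℕ) (xt x : H) (hx : x ≠ xt) :
    HasFDerivAt (fun y => ‖y - xt‖ ^ (q + 2))
      ((((q : ℝ) + 2) * ‖x - xt‖ ^ q) • (innerSL ℝ (x - xt))) x := by
  have hr : (0:ℝ) < ‖x - xt‖ := by
    rw [norm_pos_iff, sub_ne_zero]; exact hx
  have hg : HasFDerivAt (fun y : H => ‖y - xt‖ ^ 2)
      ((2 : ℝ) • (innerSL ℝ (x - xt))) x := by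
    have := ((hasFDerivAt_id x).sub_const xt).norm_sq
    refine this.congr_fderiv ?_
    ext v
    simp
  set cexp : ℝ := ((q : ℝ) + 2) / 2 with hcexp
  have hpos : (0:ℝ) < ‖x - xt‖ ^ 2 := by positivity
  have hrpow : HasDerivAt (fun t : ℝ => t ^ cexp)
      (cexp * (‖x - xt‖ ^ 2) ^ (cexp - 1)) (‖x - xt‖ ^ 2) :=
    Real.hasDerivAt_rpow_const (Or.inl (ne_of_gt hpos))
  have hcomp := hrpow.comp_hasFDerivAt x hg
  have hfun : (fun y : H => (‖y - xt‖ ^ 2) ^ cexp) = fun y : H => ‖y - xt‖ ^ (q + 2) := by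
    funext y
    rw [← Real.rpow_natCast (‖y - xt‖) 2, ← Real.rpow_mul (norm_nonneg _),
      show ((2:ℕ) : ℝ) * cexp = ((q + 2 : ℕ) : ℝ) by push_cast [hcexp]; ring,
      Real.rpow_natCast]
  have hcomp' : HasFDerivAt (fun y : H => ((‖y - xt‖ : ℝ) ^ 2) ^ cexp)
      ((cexp * (‖x - xt‖ ^ 2) ^ (cexp - 1)) • (2 : ℝ) • (innerSL ℝ (x - xt))) x := hcomp
  rw [hfun] at hcomp'
  convert hcomp' using 1
  have hbase : ((‖x - xt‖ : ℝ) ^ 2) ^ (cexp - 1) = ‖x - xt‖ ^ q := by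
    rw [← Real.rpow_natCast (‖x - xt‖) 2, ← Real.rpow_mul (norm_nonneg _),
      show ((2:ℕ) : ℝ) * (cexp - 1) = ((q : ℕ) : ℝ) by push_cast [hcexp]; ring,
      Real.rpow_natCast]
  rw [hbase]
  ext v
  simp
  ring

lemma conv_ineq (A : H → ℝ) (hconv : ConvexOn ℝ Set.univ A) (x y : H)
    (hd : DifferentiableAt ℝ A x) : fderiv ℝ A x (y - x) ≤ A y - A x := by
  have hq : ∀ t : ℝ, t ∈ Set.Ioc (0:ℝ) 1 → (A (x + t • (y - x)) - A x) / t ≤ A y - A x := by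
    intro t ht
    have hcx : x + t • (y - x) = (1 - t) • x + t • y := by module
    have h := hconv.2 (Set.mem_univ x) (Set.mem_univ y) (by linarith [ht.1, ht.2] : 0 ≤ 1 - t)
      (le_of_lt ht.1) (by ring : (1 - t) + t = 1)
    rw [← hcx] at h
    rw [div_le_iff₀ ht.1]
    simp only [smul_eq_mul] at h
    nlinarith [ht.1, ht.2]
  have hline : HasDerivAt (fun t : ℝ => x + t • (y - x)) (y - x) 0 := by
    simpa using ((hasDerivAt_id (0:ℝ)).smul_const (y - x)).const_add x
  have hder : HasDerivAt (fun t : ℝ => A (x + t • (y - x))) (fderiv ℝ A x (y - x)) 0 := by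
    have hd' : HasFDerivAt A (fderiv ℝ A x) (x + (0:ℝ) • (y - x)) := by
      simpa using hd.hasFDerivAt
    have := hd'.comp_hasDerivAt 0 hline
    exact this
  have htend : Filter.Tendsto (slope (fun t : ℝ => A (x + t • (y - x))) 0)
      (nhdsWithin 0 (Set.Ioi 0)) (nhds (fderiv ℝ A x (y - x))) :=
    (hasDerivAt_iff_tendsto_slope.mp hder).mono_left
      (nhdsWithin_mono 0 (fun t ht => ne_of_gt ht))
  refine le_of_tendsto htend ?_
  filter_upwards [Ioc_mem_nhdsGT_of_mem (by norm_num : (0:ℝ) ∈ Set.Ico (0:ℝ) 1)] with t ht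
  rw [slope_def_field]
  simp only [sub_zero, zero_smul, add_zero]
  have := hq t ht
  rw [div_eq_mul_inv] at this ⊢
  simpa [zero_smul] using this

end Inner

set_option maxHeartbeats 1000000 in
theorem tensor_extragradient_one_step {d : ℕ} (p : ℕ) (hp : 2 ≤ p)
    (A : EuclideanSpace ℝ (Fin d) → ℝ)
    (hA : ContDiff ℝ (p : ℕ∞) A) (hconv : ConvexOn ℝ Set.univ A)
    (L M : ℝ) (hL : 0 < L)
    (hLip : ∀ x y : EuclideanSpace ℝ (Fin d),
      ‖iteratedFDeriv ℝ p A x - iteratedFDeriv ℝ p A y‖ ≤ L * ‖x - y‖)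
    (hM : L ≤ M)
    (xs : EuclideanSpace ℝ (Fin d)) (hmin : IsMinOn A Set.univ xs)
    (xt xhalf xnext : EuclideanSpace ℝ (Fin d))
    (hhalf : IsMinOn (fun x => taylorApprox p A xt x +
      ((p : ℝ) * M / (Nat.factorial (p + 1) : ℝ)) * ‖x - xt‖ ^ (p + 1)) Set.univ xhalf)
    (γ : ℝ) (hγ : γ = ((M / (Nat.factorial (p - 1) : ℝ)) * ‖xhalf - xt‖ ^ (p - 1))⁻¹)
    (hnext : xnext = xt - γ • gradient A xhalf) :
    ‖xnext - xs‖ ^ 2 ≤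
      ‖xt - xs‖ ^ 2 - (1 - (L / ((p : ℝ) * M)) ^ 2) * ‖xt - xhalf‖ ^ 2 := by
  obtain ⟨k, rfl⟩ : ∃ k, p = k + 2 := ⟨p - 2, by omega⟩
  have hM0 : 0 < M := lt_of_lt_of_le hL hM
  set w : EuclideanSpace ℝ (Fin d) := xhalf - xt with hw
  by_cases hr0 : w = 0
  · -- degenerate case xhalf = xt
    have hxx : xhalf = xt := by rwa [hw, sub_eq_zero] at hr0
    have hγ0 : γ = 0 := by
      rw [hγ, hr0]
      simp [zero_pow (by omega : k + 2 - 1 ≠ 0)]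
    have hxnext : xnext = xt := by rw [hnext, hγ0]; simp
    rw [hxnext, hxx]
    simp
  -- main case
  have hr : 0 < ‖w‖ := norm_pos_iff.mpr hr0
  set r : ℝ := ‖w‖ with hrdef
  set B := fderiv ℝ A with hB
  have hBc : ContDiff ℝ ((k + 1 : ℕ) : ℕ∞) B :=
    hA.fderiv_right (by exact_mod_cast le_refl (k + 2))
  have hBLip : ∀ x y : EuclideanSpace ℝ (Fin d), ‖iteratedFDeriv ℝ (k + 1) B x - iteratedFDeriv ℝ (k + 1) B y‖ ≤
      L * ‖x - y‖ := lip_fderiv (k + 1) A L hLip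
  have hrem := taylor_remainder (k + 1) B hBc L hBLip xt xhalf
  set T := ∑ j ∈ Finset.range (k + 2),
      (1 / (Nat.factorial j : ℝ)) • iteratedFDeriv ℝ j B xt (fun _ => xhalf - xt) with hT
  have hTd : HasFDerivAt (fun x => taylorApprox (k + 2) A xt x) T xhalf :=
    taylor_poly_hasFDerivAt (k + 2) A hA xt xhalf
  set cst : ℝ := ((k + 2 : ℕ) : ℝ) * M / (Nat.factorial (k + 3) : ℝ) with hcst
  have hregF := norm_pow_hasFDerivAt (k + 1) xt xhalf (by
    intro hcontra; exact hr0 (by rw [hw, hcontra, sub_self]))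
  have htotal : HasFDerivAt (fun x => taylorApprox (k + 2) A xt x +
      cst * ‖x - xt‖ ^ (k + 3))
      (T + cst • ((((k + 1 : ℕ) : ℝ) + 2) * r ^ (k + 1)) • innerSL ℝ w) xhalf :=
    hTd.add (hregF.const_mul cst)
  have hloc : IsLocalMin (fun x => taylorApprox (k + 2) A xt x + cst * ‖x - xt‖ ^ (k + 3))
      xhalf := Filter.Eventually.of_forall (fun x => isMinOn_iff.mp hhalf x (Set.mem_univ x))
  have hfo := hloc.hasFDerivAt_eq_zero htotal
  set c : ℝ := M / (Nat.factorial (k + 1) : ℝ) * r ^ (k + 1) with hc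
  have hcpos : 0 < c := by
    rw [hc]; positivity
  have hcsteq : cst • ((((k + 1 : ℕ) : ℝ) + 2) * r ^ (k + 1)) • innerSL ℝ w
      = c • innerSL ℝ w := by
    rw [smul_smul]
    congr 1
    rw [hcst, hc, Nat.factorial_succ (k + 2), Nat.factorial_succ (k + 1)]
    push_cast
    have h1 : ((Nat.factorial (k + 1) : ℝ)) ≠ 0 := by positivity
    field_simp
    ring
  rw [hcsteq] at hfo
  have hTeq : T = -(c • innerSL ℝ w) := by
    have := eq_neg_of_add_eq_zero_left hfo
    exact this
  -- gradient and error vector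
  have hdiffA : DifferentiableAt ℝ A xhalf :=
    (hA.differentiable (by simp)) xhalf
  set g : EuclideanSpace ℝ (Fin d) := gradient A xhalf with hg
  set e : EuclideanSpace ℝ (Fin d) := g + c • w with he
  have htoDual_g : (InnerProductSpace.toDual ℝ (EuclideanSpace ℝ (Fin d))) g = B xhalf := by
    rw [hg, gradient]
    exact (InnerProductSpace.toDual ℝ (EuclideanSpace ℝ (Fin d))).apply_symm_apply _
  have htoDual_w : (InnerProductSpace.toDual ℝ (EuclideanSpace ℝ (Fin d))) w = innerSL ℝ w := by
    ext v
    simp [InnerProductSpace.toDual_apply_apply]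
  have henorm : ‖e‖ ≤ L * r ^ (k + 2) / (Nat.factorial (k + 2) : ℝ) := by
    have h1 : (InnerProductSpace.toDual ℝ (EuclideanSpace ℝ (Fin d))) e = B xhalf - T := by
      rw [he, map_add, map_smul, htoDual_g, htoDual_w, hTeq]
      abel
    have h2 : ‖e‖ = ‖B xhalf - T‖ := by
      rw [← h1, LinearIsometryEquiv.norm_map]
    rw [h2]
    calc ‖B xhalf - T‖ ≤ L * ‖xhalf - xt‖ ^ (k + 1 + 1) / (Nat.factorial (k + 1 + 1) : ℝ) := hrem
      _ = L * r ^ (k + 2) / (Nat.factorial (k + 2) : ℝ) := by rw [hrdef, hw]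
  -- convexity inequality
  have hconvineq : (0:ℝ) ≤ inner ℝ g (xhalf - xs) := by
    have h1 := conv_ineq A hconv xhalf xs hdiffA
    have h2 : A xs - A xhalf ≤ 0 :=
      sub_nonpos.mpr (isMinOn_iff.mp hmin xhalf (Set.mem_univ xhalf))
    have h3 : fderiv ℝ A xhalf (xs - xhalf) = inner ℝ g (xs - xhalf) := by
      rw [hg, gradient]
      exact (InnerProductSpace.toDual_symm_apply).symm
    have h4 : (inner ℝ g (xs - xhalf) : ℝ) ≤ 0 := by rw [← h3]; linarith
    have h5 : (inner ℝ g (xhalf - xs) : ℝ) = -(inner ℝ g (xs - xhalf) : ℝ) := by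
      rw [show xhalf - xs = -(xs - xhalf) by abel, inner_neg_right]
    linarith [h5 ▸ neg_nonneg.mpr h4]
  -- gamma
  have hγc : γ = c⁻¹ := by
    rw [hγ, hc, hrdef, hw]
    norm_num
  have hγpos : 0 ≤ γ := by rw [hγc]; positivity
  set u : EuclideanSpace ℝ (Fin d) := xt - xhalf with hu
  have hur : ‖u‖ = r := by rw [hu, hrdef, hw, norm_sub_rev]
  have hgdecomp : γ • g = u + γ • e := by
    have hge : g = e - c • w := by rw [he]; abel
    rw [hge, smul_sub, smul_smul, hγc, inv_mul_cancel₀ (ne_of_gt hcpos), one_smul]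
    rw [show u = -w by rw [hu, hw]; abel]
    abel
  have hxnext : xnext - xs = (xt - xs) - γ • g := by rw [hnext]; abel
  -- final algebra
  have hsplit : xt - xs = u + (xhalf - xs) := by rw [hu]; abel
  have expand : ‖xnext - xs‖ ^ 2 =
      ‖xt - xs‖ ^ 2 - 2 * inner ℝ (xt - xs) (γ • g) + ‖γ • g‖ ^ 2 := by
    rw [hxnext]; exact norm_sub_sq_real _ _
  have hinner1 : (inner ℝ (xt - xs) (γ • g) : ℝ) =
      inner ℝ u (γ • g) + inner ℝ (xhalf - xs) (γ • g) := by
    rw [hsplit, inner_add_left]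
  have hinner2 : (inner ℝ u (γ • g) : ℝ) = ‖u‖ ^ 2 + γ * inner ℝ u e := by
    rw [hgdecomp, inner_add_right, real_inner_self_eq_norm_sq, real_inner_smul_right]
  have hinner3 : (0:ℝ) ≤ inner ℝ (xhalf - xs) (γ • g) := by
    rw [real_inner_smul_right]
    exact mul_nonneg hγpos (by rw [real_inner_comm]; exact hconvineq)
  have hnormg : ‖γ • g‖ ^ 2 = ‖u‖ ^ 2 + 2 * (γ * inner ℝ u e) + ‖γ • e‖ ^ 2 := by
    rw [hgdecomp, norm_add_sq_real, real_inner_smul_right]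
  have hγe : ‖γ • e‖ ≤ L / (((k:ℝ) + 2) * M) * r := by
    rw [norm_smul, Real.norm_eq_abs, abs_of_nonneg hγpos]
    calc γ * ‖e‖ ≤ γ * (L * r ^ (k + 2) / (Nat.factorial (k + 2) : ℝ)) := by
          exact mul_le_mul_of_nonneg_left henorm hγpos
      _ = L / (((k:ℝ) + 2) * M) * r := by
          rw [hγc, hc, Nat.factorial_succ (k + 1)]
          push_cast
          have h1 : ((Nat.factorial (k + 1) : ℝ)) ≠ 0 := by positivity
          have h2 : r ≠ 0 := ne_of_gt hr
          field_simp
          ring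
  have hγe2 : ‖γ • e‖ ^ 2 ≤ (L / (((k:ℝ) + 2) * M)) ^ 2 * r ^ 2 := by
    have hnn : (0:ℝ) ≤ L / (((k:ℝ) + 2) * M) * r := by positivity
    calc ‖γ • e‖ ^ 2 ≤ (L / (((k:ℝ) + 2) * M) * r) ^ 2 := by
          exact pow_le_pow_left₀ (norm_nonneg _) hγe 2
      _ = (L / (((k:ℝ) + 2) * M)) ^ 2 * r ^ 2 := by ring
  have hfinal : ‖xnext - xs‖ ^ 2 ≤ ‖xt - xs‖ ^ 2 - ‖u‖ ^ 2 + ‖γ • e‖ ^ 2 := by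
    rw [expand, hinner1, hinner2, hnormg]
    nlinarith [hinner3]
  have hgoal : ‖xt - xhalf‖ = r := hur
  calc ‖xnext - xs‖ ^ 2 ≤ ‖xt - xs‖ ^ 2 - ‖u‖ ^ 2 + ‖γ • e‖ ^ 2 := hfinal
    _ ≤ ‖xt - xs‖ ^ 2 - r ^ 2 + (L / (((k:ℝ) + 2) * M)) ^ 2 * r ^ 2 := by
        rw [hur]; linarith [hγe2]
    _ = ‖xt - xs‖ ^ 2 - (1 - (L / (((k + 2 : ℕ) : ℝ) * M)) ^ 2) * ‖xt - xhalf‖ ^ 2 := by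
        rw [hgoal]
        push_cast
        ring
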